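/- Let K be an infinite field of characteristic different from 2 and 3, and let F₄ be the free associative unital K-algebra on four generators x, y, z, t. Then the element [x, y]·[z, t] does NOT belong to T^{(3)}(F₄). (Hence the restriction to rank 3 in the theorem T^{(m)}·T^{(n)} ⊆ T^{(m+n-1)} is essential.) -/

import Mathlib

/-- The right-normed commutator: `rnComm a [b₁, …, b_k] = [a, b₁, …, b_k]`,
where `[u, v] = u * v - v * u`. -/
def rnComm {A : Type*} [Ring A] : A → List A → A
  | a, [] => a
  | a, b :: l => rnComm (a * b - b * a) l

/-- `Tideal A m` is the two-sided ideal `T⁽ᵐ⁾(A)` of `A` generated by all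
right-normed commutators `[a₁, …, a_m]` of length `m`. -/
def Tideal (A : Type*) [Ring A] (m : ℕ) : TwoSidedIdeal A :=
  TwoSidedIdeal.span { x | ∃ (a : A) (l : List A), l.length + 1 = m ∧ rnComm a l = x }

section Grassmann
open ExteriorAlgebra

variable {R M : Type*} [CommRing R] [AddCommGroup M] [Module R M]

lemma ext_ι_mul (m : M) {q : ℕ} {y : ExteriorAlgebra R M} (hy : y ∈ ⋀[R]^q M) :
    ι R m * y = ((-1 : ℤ)^q) • (y * ι R m) := by
  induction hy using Submodule.pow_induction_on_left' with
  | algebraMap r => simp [Algebra.commutes]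
  | add a b i ha hb iha ihb => rw [mul_add, iha, ihb, add_mul, smul_add]
  | mem_mul u hu i x hx ih =>
      obtain ⟨n, rfl⟩ := hu
      have h0 : ι R m * ι R n = -(ι R n * ι R m) :=
        eq_neg_of_add_eq_zero_left (ι_add_mul_swap m n)
      rw [← mul_assoc, h0, neg_mul, mul_assoc, ih, mul_smul_comm, ← neg_smul, mul_assoc,
        pow_succ, mul_neg_one]

lemma ext_homog_mul {p q : ℕ} {x y : ExteriorAlgebra R M}
    (hx : x ∈ ⋀[R]^p M) (hy : y ∈ ⋀[R]^q M) :
    x * y = ((-1 : ℤ)^(p*q)) • (y * x) := by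
  induction hx using Submodule.pow_induction_on_left' with
  | algebraMap r => simp [Algebra.commutes]
  | add a b i ha hb iha ihb => rw [add_mul, iha, ihb, mul_add, smul_add]
  | mem_mul u hu i x' hx' ih =>
      obtain ⟨n, rfl⟩ := hu
      rw [mul_assoc, ih, mul_smul_comm, ← mul_assoc, ext_ι_mul n hy,
        smul_mul_assoc, smul_smul, ← pow_add, mul_assoc, Nat.succ_mul]

lemma ext_comm_homog {p q r : ℕ} {x y z : ExteriorAlgebra R M}
    (hx : x ∈ ⋀[R]^p M) (hy : y ∈ ⋀[R]^q M) (hz : z ∈ ⋀[R]^r M) :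
    (x*y - y*x) * z = z * (x*y - y*x) := by
  have hxy : x * y ∈ ⋀[R]^(p+q) M := by
    rw [exteriorPower, pow_add]; exact Submodule.mul_mem_mul hx hy
  rcases Nat.even_or_odd (q * p) with he | ho
  · have h1 : y * x = x * y := by rw [ext_homog_mul hy hx, he.neg_one_pow, one_smul]
    rw [h1, sub_self, zero_mul, mul_zero]
  · obtain ⟨hq, hp⟩ := Nat.odd_mul.mp ho
    have h1 : y * x = -(x * y) := by
      rw [ext_homog_mul hy hx, ho.neg_one_pow, neg_one_zsmul]
    have h2 : (x * y) * z = z * (x * y) := by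
      have : Even ((p + q) * r) := (hp.add_odd hq).mul_right r
      rw [ext_homog_mul hxy hz, this.neg_one_pow, one_smul]
    rw [h1, sub_neg_eq_add, add_mul, mul_add, h2]

lemma ext_comm_central (x y z : ExteriorAlgebra R M) :
    (x*y - y*x) * z = z * (x*y - y*x) := by
  induction x using DirectSum.Decomposition.inductionOn (fun i => ⋀[R]^i M) with
  | zero => simp
  | add a b iha ihb =>
      have key : ((a+b)*y - y*(a+b)) = (a*y - y*a) + (b*y - y*b) := by noncomm_ring
      rw [key, add_mul, iha, ihb, mul_add]
  | homogeneous hx =>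
      induction y using DirectSum.Decomposition.inductionOn (fun i => ⋀[R]^i M) with
      | zero => simp
      | add a b iha ihb =>
          have key : ((hx:ExteriorAlgebra R M)*(a+b) - (a+b)*(hx:ExteriorAlgebra R M))
              = ((hx:ExteriorAlgebra R M)*a - a*(hx:ExteriorAlgebra R M))
                + ((hx:ExteriorAlgebra R M)*b - b*(hx:ExteriorAlgebra R M)) := by noncomm_ring
          rw [key, add_mul, iha, ihb, mul_add]
      | homogeneous hy =>
          induction z using DirectSum.Decomposition.inductionOn (fun i => ⋀[R]^i M) with
          | zero => simp
          | add a b iha ihb => rw [mul_add, add_mul, iha, ihb]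
          | homogeneous hz => exact ext_comm_homog hx.2 hy.2 hz.2

end Grassmann

noncomputable def altF (K : Type*) [CommRing K] : ∀ i : ℕ, (Fin 4 → K) [⋀^Fin i]→ₗ[K] K
  | 4 => Matrix.detRowAlternating
  | _ => 0

lemma altF_four (K : Type*) [CommRing K] : altF K 4 = Matrix.detRowAlternating := rfl

set_option maxHeartbeats 2000000 in
theorem comm_mul_comm_not_mem_T3
    (K : Type*) [Field K] [Infinite K] (h2 : (2 : K) ≠ 0) (h3 : (3 : K) ≠ 0)
    (x y z t : FreeAlgebra K (Fin 4))
    (hx : x = FreeAlgebra.ι K 0) (hy : y = FreeAlgebra.ι K 1)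
    (hz : z = FreeAlgebra.ι K 2) (ht : t = FreeAlgebra.ι K 3) :
    (x * y - y * x) * (z * t - t * z) ∉ Tideal (FreeAlgebra K (Fin 4)) 3 := by
  classical
  subst hx hy hz ht
  intro hmem
  have h4 : (4 : K) ≠ 0 := by
    have h22 : (2:K)*(2:K) ≠ 0 := mul_ne_zero h2 h2
    norm_num at h22
    exact h22
  let e : Fin 4 → (Fin 4 → K) := fun i => Pi.single i 1
  let φ : FreeAlgebra K (Fin 4) →ₐ[K] ExteriorAlgebra K (Fin 4 → K) :=
    FreeAlgebra.lift K (fun i => ExteriorAlgebra.ι K (e i))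
  -- the image of the element under φ is zero
  have hφ0 : φ ((FreeAlgebra.ι K 0 * FreeAlgebra.ι K 1 - FreeAlgebra.ι K 1 * FreeAlgebra.ι K 0)
      * (FreeAlgebra.ι K 2 * FreeAlgebra.ι K 3 - FreeAlgebra.ι K 3 * FreeAlgebra.ι K 2)) = 0 := by
    have hsub : { v : FreeAlgebra K (Fin 4) |
        ∃ (a : FreeAlgebra K (Fin 4)) (l : List (FreeAlgebra K (Fin 4))),
          l.length + 1 = 3 ∧ rnComm a l = v } ⊆ (TwoSidedIdeal.ker φ.toRingHom : Set _) := by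
      rintro v ⟨a, l, hlen, rfl⟩
      match l, hlen with
      | [b, c], _ =>
        show rnComm a [b, c] ∈ TwoSidedIdeal.ker φ.toRingHom
        rw [TwoSidedIdeal.mem_ker]
        show φ ((a * b - b * a) * c - c * (a * b - b * a)) = 0
        simp only [map_sub, map_mul]
        rw [sub_eq_zero]
        exact ext_comm_central (φ a) (φ b) (φ c)
    have := TwoSidedIdeal.mem_span_iff.mp hmem (TwoSidedIdeal.ker φ.toRingHom) hsub
    exact (TwoSidedIdeal.mem_ker _).mp this
  -- compute the image explicitly
  have hlift : ∀ i : Fin 4, φ (FreeAlgebra.ι K i) = ExteriorAlgebra.ι K (e i) := fun i =>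
    FreeAlgebra.lift_ι_apply _ _
  simp only [map_sub, map_mul, hlift] at hφ0
  have hswap : ∀ i j : Fin 4,
      ExteriorAlgebra.ι K (e j) * ExteriorAlgebra.ι K (e i)
        = -(ExteriorAlgebra.ι K (e i) * ExteriorAlgebra.ι K (e j)) := fun i j =>
    eq_neg_of_add_eq_zero_left (ExteriorAlgebra.ι_add_mul_swap (e j) (e i))
  have hQ : ExteriorAlgebra.ιMulti K 4 e
      = ExteriorAlgebra.ι K (e 0) * (ExteriorAlgebra.ι K (e 1)
        * (ExteriorAlgebra.ι K (e 2) * (ExteriorAlgebra.ι K (e 3) * 1))) := by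
    rw [ExteriorAlgebra.ιMulti_apply]
    simp only [List.ofFn_succ, List.ofFn_zero, List.prod_cons, List.prod_nil]
    rfl
  have key : (ExteriorAlgebra.ι K (e 0) * ExteriorAlgebra.ι K (e 1)
        - ExteriorAlgebra.ι K (e 1) * ExteriorAlgebra.ι K (e 0))
      * (ExteriorAlgebra.ι K (e 2) * ExteriorAlgebra.ι K (e 3)
        - ExteriorAlgebra.ι K (e 3) * ExteriorAlgebra.ι K (e 2))
      = ExteriorAlgebra.ιMulti K 4 e + ExteriorAlgebra.ιMulti K 4 e
        + ExteriorAlgebra.ιMulti K 4 e + ExteriorAlgebra.ιMulti K 4 e := by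
    rw [hswap 0 1, hswap 2 3, hQ]
    noncomm_ring
  rw [key] at hφ0
  have hQval : ExteriorAlgebra.liftAlternating (altF K) (ExteriorAlgebra.ιMulti K 4 e) = 1 := by
    rw [ExteriorAlgebra.liftAlternating_apply_ιMulti, altF_four]
    show Matrix.det (Matrix.of fun i => e i) = 1
    have hone : (Matrix.of fun i => e i) = (1 : Matrix (Fin 4) (Fin 4) K) := by
      ext i j
      simp [e, Matrix.one_apply, Pi.single_apply, eq_comm]
    rw [hone, Matrix.det_one]
  have hfin := congrArg (ExteriorAlgebra.liftAlternating (altF K)) hφ0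
  rw [map_add, map_add, map_add, map_zero, hQval] at hfin
  norm_num at hfin
  exact h4 hfin
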